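/- (Buchberger's criterion for s-monomial type polynomials.) Let R be a commutative ring with a permutable weak regular sequence s_1,…,s_k of non-units, S = R[x_1,…,x_n] with a fixed monomial order, and let G = {f_1,…,f_m} be nonzero polynomials of s-monomial type, U the ideal of S generated by f_1,…,f_m. Then G is a Gröbner basis of U if and only if for every 1 ≤ i < j ≤ m the element S′(f_i,f_j) reduces to zero modulo G. -/

import Mathlib

open MvPolynomial
open scoped MonomialOrder

namespace PaperGB

variable {n : ℕ} {R : Type*} [CommSemiring R]

/-- The degree (leading exponent) of a multivariate polynomial w.r.t. a monomial order. -/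
noncomputable def mDeg (m : MonomialOrder (Fin n)) (f : MvPolynomial (Fin n) R) :
    Fin n →₀ ℕ :=
  m.toSyn.symm (f.support.sup fun d => m.toSyn d)

/-- The leading coefficient. -/
noncomputable def mLC (m : MonomialOrder (Fin n)) (f : MvPolynomial (Fin n) R) : R :=
  f.coeff (mDeg m f)

/-- The leading term. -/
noncomputable def mLT (m : MonomialOrder (Fin n)) (f : MvPolynomial (Fin n) R) :
    MvPolynomial (Fin n) R :=
  monomial (mDeg m f) (mLC m f)

variable {R : Type*} [CommRing R]

/-- The leading term ideal. -/
noncomputable def mLTIdeal (m : MonomialOrder (Fin n)) (I : Ideal (MvPolynomial (Fin n) R)) :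
    Ideal (MvPolynomial (Fin n) R) :=
  Ideal.span ((fun g => mLT m g) '' {g | g ∈ I ∧ g ≠ 0})

/-- `f` is a Gröbner basis of `I`. -/
def IsGroebnerBasis (m : MonomialOrder (Fin n)) (I : Ideal (MvPolynomial (Fin n) R))
    {k : ℕ} (f : Fin k → MvPolynomial (Fin n) R) : Prop :=
  (∀ i, f i ≠ 0) ∧ (∀ i, f i ∈ I) ∧
    Ideal.span (Set.range fun i => mLT m (f i)) = mLTIdeal m I

/-- `g` reduces to zero modulo the family `f`. -/
def ReducesToZero (m : MonomialOrder (Fin n)) {k : ℕ} (f : Fin k → MvPolynomial (Fin n) R)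
    (g : MvPolynomial (Fin n) R) : Prop :=
  ∃ p : Fin k → MvPolynomial (Fin n) R,
    g = ∑ i, p i * f i ∧
    ∀ i, p i * f i ≠ 0 → mDeg m (p i) + mDeg m (f i) ≼[m] mDeg m g

/-- A weakly regular sequence. -/
def IsWeakRegularSeq {k : ℕ} (s : Fin k → R) : Prop :=
  ∀ i : Fin k, ∀ x : R,
    s i * x ∈ Ideal.span (s '' {j | j < i}) → x ∈ Ideal.span (s '' {j | j < i})

/-- A permutable weak regular sequence of non-units. -/
def IsPermutableWeakRegularSeq {k : ℕ} (s : Fin k → R) : Prop :=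
  (∀ i, ¬ IsUnit (s i)) ∧ ∀ σ : Equiv.Perm (Fin k), IsWeakRegularSeq (s ∘ σ)

/-- `M` has a free resolution `0 → F_p → ⋯ → F_0 → M → 0` by finitely generated
free `S`-modules. -/
def HasFiniteFreeResolutionOfLength (S : Type*) [CommRing S] (M : Type*) [AddCommGroup M]
    [Module S M] (p : ℕ) : Prop :=
  ∃ (d : ℕ → ℕ) (g : ∀ i : ℕ, (Fin (d (i + 1)) → S) →ₗ[S] (Fin (d i) → S))
    (ε : (Fin (d 0) → S) →ₗ[S] M),
    (∀ i, p < i → d i = 0) ∧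
    Function.Surjective ε ∧
    LinearMap.range (g 0) = LinearMap.ker ε ∧
    ∀ i, LinearMap.range (g (i + 1)) = LinearMap.ker (g i)

/-- `M` has an infinite free resolution `⋯ → F_p → F_p → F_p → F_{p-1} → ⋯ → F_0 → M → 0`
by finitely generated free `S`-modules, whose modules are constant from stage `p` on. -/
def HasEventuallyConstantFreeResolution (S : Type*) [CommRing S] (M : Type*) [AddCommGroup M]
    [Module S M] (p : ℕ) : Prop :=
  ∃ (d : ℕ → ℕ) (g : ∀ i : ℕ, (Fin (d (i + 1)) → S) →ₗ[S] (Fin (d i) → S))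
    (ε : (Fin (d 0) → S) →ₗ[S] M),
    (∀ i, p ≤ i → d i = d p) ∧
    Function.Surjective ε ∧
    LinearMap.range (g 0) = LinearMap.ker ε ∧
    ∀ i, LinearMap.range (g (i + 1)) = LinearMap.ker (g i)

end PaperGB

open PaperGB

/-- The `S'`-polynomial of two `s`-monomial type polynomials `f i` and `f j`,
where `mLC m (f i) = c i * ∏ t, s t ^ α i t` with `c i` a unit. -/
noncomputable def sMonSPoly {n k : ℕ} {R : Type*} [CommRing R] (m : MonomialOrder (Fin n))
    (s : Fin k → R) {M : ℕ} (f : Fin M → MvPolynomial (Fin n) R) (c : Fin M → Rˣ)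
    (α : Fin M → Fin k → ℕ) (i j : Fin M) : MvPolynomial (Fin n) R :=
  MvPolynomial.monomial ((mDeg m (f i) ⊔ mDeg m (f j)) - mDeg m (f i))
      (↑(c i)⁻¹ * ∏ t, s t ^ (max (α i t) (α j t) - α i t)) * f i
  - MvPolynomial.monomial ((mDeg m (f i) ⊔ mDeg m (f j)) - mDeg m (f j))
      (↑(c j)⁻¹ * ∏ t, s t ^ (max (α i t) (α j t) - α j t)) * f j

namespace PGBAux
open PaperGB

variable {n : ℕ} {R : Type*} [CommSemiring R] (m : MonomialOrder (Fin n))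

theorem toSyn_mDeg (f : MvPolynomial (Fin n) R) :
    m.toSyn (mDeg m f) = f.support.sup fun d => m.toSyn d := by
  simp [mDeg]

theorem le_mDeg {f : MvPolynomial (Fin n) R} {d : Fin n →₀ ℕ} (h : d ∈ f.support) :
    m.toSyn d ≤ m.toSyn (mDeg m f) := by
  rw [toSyn_mDeg]; exact Finset.le_sup h

theorem mDeg_mem {f : MvPolynomial (Fin n) R} (h : f ≠ 0) : mDeg m f ∈ f.support := by
  obtain ⟨d, hd, he⟩ := Finset.exists_mem_eq_sup f.support
    (MvPolynomial.support_nonempty.2 h) (fun d => m.toSyn d)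
  have : mDeg m f = d := by
    rw [mDeg, he, AddEquiv.symm_apply_apply]
  rwa [this]

theorem mLC_ne_zero {f : MvPolynomial (Fin n) R} (h : f ≠ 0) : mLC m f ≠ 0 := by
  have := mDeg_mem m h
  rwa [MvPolynomial.mem_support_iff] at this

theorem mDeg_zero : mDeg m (0 : MvPolynomial (Fin n) R) = 0 := by
  simp [mDeg]

theorem coeff_eq_zero_of_gt {f : MvPolynomial (Fin n) R} {d : Fin n →₀ ℕ}
    (h : m.toSyn (mDeg m f) < m.toSyn d) : MvPolynomial.coeff d f = 0 := by
  by_contra hc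
  exact absurd (le_mDeg m (MvPolynomial.mem_support_iff.2 hc)) (not_le.2 h)

theorem mDeg_monomial_le (d : Fin n →₀ ℕ) (a : R) :
    m.toSyn (mDeg m (monomial d a)) ≤ m.toSyn d := by
  rw [toSyn_mDeg]
  apply Finset.sup_le
  intro b hb
  have := MvPolynomial.support_monomial_subset hb
  simp only [Finset.mem_singleton] at this
  rw [this]

theorem mDeg_C_le (a : R) : m.toSyn (mDeg m (C a : MvPolynomial (Fin n) R)) ≤ 0 := by
  rw [MvPolynomial.C_apply]
  have := mDeg_monomial_le m (0 : Fin n →₀ ℕ) a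
  rwa [map_zero] at this

theorem mDeg_monomial {d : Fin n →₀ ℕ} {a : R} (ha : a ≠ 0) :
    mDeg m (monomial d a) = d := by
  apply m.toSyn.injective
  apply le_antisymm (mDeg_monomial_le m d a)
  apply le_mDeg
  rw [MvPolynomial.mem_support_iff, MvPolynomial.coeff_monomial, if_pos rfl]
  exact ha

theorem mem_support_sum {ι : Type*} {T : Finset ι} {h : ι → MvPolynomial (Fin n) R}
    {d : Fin n →₀ ℕ} (hd : d ∈ (∑ i ∈ T, h i).support) : ∃ i ∈ T, d ∈ (h i).support := by
  classical
  have := MvPolynomial.support_sum (s := T) (f := h) hd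
  simpa using Finset.mem_biUnion.mp this

theorem mDeg_sum_le {ι : Type*} {T : Finset ι} {h : ι → MvPolynomial (Fin n) R}
    {δ : m.syn} (hb : ∀ i ∈ T, m.toSyn (mDeg m (h i)) ≤ δ) :
    m.toSyn (mDeg m (∑ i ∈ T, h i)) ≤ δ := by
  rw [toSyn_mDeg]
  apply Finset.sup_le
  intro d hd
  obtain ⟨i, hiT, hdi⟩ := mem_support_sum hd
  exact le_trans (le_mDeg m hdi) (hb i hiT)

theorem mem_support_mul {p q : MvPolynomial (Fin n) R} {d : Fin n →₀ ℕ}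
    (hd : d ∈ (p * q).support) :
    ∃ a ∈ p.support, ∃ b ∈ q.support, d = a + b := by
  classical
  have := MvPolynomial.support_mul p q hd
  rw [Finset.mem_add] at this
  obtain ⟨a, ha, b, hb, hab⟩ := this
  exact ⟨a, ha, b, hb, hab.symm⟩

theorem mDeg_mul_le (p q : MvPolynomial (Fin n) R) :
    m.toSyn (mDeg m (p * q)) ≤ m.toSyn (mDeg m p) + m.toSyn (mDeg m q) := by
  rw [toSyn_mDeg]
  apply Finset.sup_le
  intro d hd
  obtain ⟨a, ha, b, hb, rfl⟩ := mem_support_mul hd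
  rw [map_add]
  exact add_le_add (le_mDeg m ha) (le_mDeg m hb)

theorem mDeg_add_le (p q : MvPolynomial (Fin n) R) :
    m.toSyn (mDeg m (p + q)) ≤ max (m.toSyn (mDeg m p)) (m.toSyn (mDeg m q)) := by
  classical
  rw [toSyn_mDeg]
  apply Finset.sup_le
  intro d hd
  have := MvPolynomial.support_add hd
  rcases Finset.mem_union.mp this with h | h
  · exact le_max_of_le_left (le_mDeg m h)
  · exact le_max_of_le_right (le_mDeg m h)

/-- The key top-coefficient lemma. -/
theorem coeff_mul_top {p q : MvPolynomial (Fin n) R} {e : Fin n →₀ ℕ}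
    (he : m.toSyn (mDeg m p) + m.toSyn (mDeg m q) ≤ m.toSyn e) :
    MvPolynomial.coeff e (p * q) =
      if e = mDeg m p + mDeg m q then mLC m p * mLC m q else 0 := by
  classical
  have key : ∀ a b : Fin n →₀ ℕ, a + b = e →
      MvPolynomial.coeff a p * MvPolynomial.coeff b q ≠ 0 →
      a = mDeg m p ∧ b = mDeg m q := by
    intro a b hab hne
    have ha : MvPolynomial.coeff a p ≠ 0 := fun h => hne (by rw [h, zero_mul])
    have hb : MvPolynomial.coeff b q ≠ 0 := fun h => hne (by rw [h, mul_zero])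
    have ha' : m.toSyn a ≤ m.toSyn (mDeg m p) := le_mDeg m (MvPolynomial.mem_support_iff.2 ha)
    have hb' : m.toSyn b ≤ m.toSyn (mDeg m q) := le_mDeg m (MvPolynomial.mem_support_iff.2 hb)
    have hsum : m.toSyn a + m.toSyn b = m.toSyn e := by rw [← map_add, hab]
    have h1 : m.toSyn a = m.toSyn (mDeg m p) := by
      by_contra hne2
      have : m.toSyn a + m.toSyn b < m.toSyn (mDeg m p) + m.toSyn (mDeg m q) :=
        add_lt_add_of_lt_of_le (lt_of_le_of_ne ha' hne2) hb'
      rw [hsum] at this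
      exact absurd he (not_le.2 this)
    have h2 : m.toSyn b = m.toSyn (mDeg m q) := by
      by_contra hne2
      have : m.toSyn a + m.toSyn b < m.toSyn (mDeg m p) + m.toSyn (mDeg m q) :=
        add_lt_add_of_le_of_lt ha' (lt_of_le_of_ne hb' hne2)
      rw [hsum] at this
      exact absurd he (not_le.2 this)
    exact ⟨m.toSyn.injective h1, m.toSyn.injective h2⟩
  rw [MvPolynomial.coeff_mul]
  by_cases hcase : e = mDeg m p + mDeg m q
  · rw [if_pos hcase]
    rw [Finset.sum_eq_single (mDeg m p, mDeg m q)]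
    · rfl
    · rintro ⟨a, b⟩ hab hne
      rw [Finset.HasAntidiagonal.mem_antidiagonal] at hab
      by_contra hc
      obtain ⟨h1, h2⟩ := key a b hab hc
      exact hne (by rw [h1, h2])
    · intro hmem
      exfalso
      apply hmem
      rw [Finset.HasAntidiagonal.mem_antidiagonal, hcase]
  · rw [if_neg hcase]
    apply Finset.sum_eq_zero
    rintro ⟨a, b⟩ hab
    rw [Finset.HasAntidiagonal.mem_antidiagonal] at hab
    by_contra hc
    obtain ⟨h1, h2⟩ := key a b hab hc
    rw [h1, h2] at hab
    exact hcase hab.symm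

section Ring

variable {R : Type*} [CommRing R] (m : MonomialOrder (Fin n))

theorem mDeg_neg (f : MvPolynomial (Fin n) R) : mDeg m (-f) = mDeg m f := by
  unfold mDeg
  rw [MvPolynomial.support_neg]

theorem mem_support_tail {f : MvPolynomial (Fin n) R} {d : Fin n →₀ ℕ}
    (hd : d ∈ (f - mLT m f).support) : d ∈ f.support ∧ d ≠ mDeg m f := by
  classical
  rw [MvPolynomial.mem_support_iff] at hd
  rw [MvPolynomial.coeff_sub, mLT, MvPolynomial.coeff_monomial] at hd
  by_cases hc : mDeg m f = d
  · rw [if_pos hc, ← hc] at hd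
    exact absurd (by rw [mLC]; ring) hd
  · rw [if_neg hc, sub_zero] at hd
    exact ⟨MvPolynomial.mem_support_iff.2 hd, fun h => hc h.symm⟩

theorem mDeg_tail_lt {f : MvPolynomial (Fin n) R} (h : f - mLT m f ≠ 0) :
    m.toSyn (mDeg m (f - mLT m f)) < m.toSyn (mDeg m f) := by
  obtain ⟨hmem, hne⟩ := mem_support_tail m (mDeg_mem m h)
  exact lt_of_le_of_ne (le_mDeg m hmem) (fun hEq => hne (m.toSyn.injective hEq))

theorem guard_add_le {p r fi : MvPolynomial (Fin n) R} {δ : m.syn}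
    (hp : p ≠ 0 → m.toSyn (mDeg m p + mDeg m fi) ≤ δ)
    (hr : r ≠ 0 → m.toSyn (mDeg m r + mDeg m fi) ≤ δ) :
    p + r ≠ 0 → m.toSyn (mDeg m (p + r) + mDeg m fi) ≤ δ := by
  intro hne
  by_cases hp0 : p = 0
  · rw [hp0, zero_add]
    rw [hp0, zero_add] at hne
    exact hr hne
  by_cases hr0 : r = 0
  · rw [hr0, add_zero]
    rw [hr0, add_zero] at hne
    exact hp hne
  have h1 := hp hp0
  have h2 := hr hr0
  rw [map_add] at h1 h2 ⊢
  have := mDeg_add_le m p r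
  rcases max_cases (m.toSyn (mDeg m p)) (m.toSyn (mDeg m r)) with ⟨hm, _⟩ | ⟨hm, _⟩
  · rw [hm] at this
    exact le_trans (add_le_add_left this _) h1
  · rw [hm] at this
    exact le_trans (add_le_add_left this _) h2

theorem guard_add_lt {p r fi : MvPolynomial (Fin n) R} {δ : m.syn}
    (hp : p ≠ 0 → m.toSyn (mDeg m p + mDeg m fi) < δ)
    (hr : r ≠ 0 → m.toSyn (mDeg m r + mDeg m fi) < δ) :
    p + r ≠ 0 → m.toSyn (mDeg m (p + r) + mDeg m fi) < δ := by
  intro hne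
  by_cases hp0 : p = 0
  · rw [hp0, zero_add]
    rw [hp0, zero_add] at hne
    exact hr hne
  by_cases hr0 : r = 0
  · rw [hr0, add_zero]
    rw [hr0, add_zero] at hne
    exact hp hne
  have h1 := hp hp0
  have h2 := hr hr0
  rw [map_add] at h1 h2 ⊢
  have := mDeg_add_le m p r
  rcases max_cases (m.toSyn (mDeg m p)) (m.toSyn (mDeg m r)) with ⟨hm, _⟩ | ⟨hm, _⟩
  · rw [hm] at this
    exact lt_of_le_of_lt (add_le_add_left this _) h1
  · rw [hm] at this
    exact lt_of_le_of_lt (add_le_add_left this _) h2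

/-- The strengthened reduction predicate: the degree condition is required whenever
`p i ≠ 0` (not merely when `p i * f i ≠ 0`). -/
def RedZ {M : ℕ} (f : Fin M → MvPolynomial (Fin n) R) (g : MvPolynomial (Fin n) R) : Prop :=
  ∃ p : Fin M → MvPolynomial (Fin n) R,
    g = ∑ i, p i * f i ∧
    ∀ i, p i ≠ 0 → m.toSyn (mDeg m (p i) + mDeg m (f i)) ≤ m.toSyn (mDeg m g)

theorem redZ_iff {M : ℕ} (f : Fin M → MvPolynomial (Fin n) R) (g : MvPolynomial (Fin n) R) :
    RedZ m f g ↔ ReducesToZero m f g := by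
  classical
  constructor
  · rintro ⟨p, hsum, hdeg⟩
    exact ⟨p, hsum, fun i hi => hdeg i (left_ne_zero_of_mul hi)⟩
  · rintro ⟨p, hsum, hdeg⟩
    refine ⟨fun i => if p i * f i = 0 then 0 else p i, ?_, ?_⟩
    · rw [hsum]
      apply Finset.sum_congr rfl
      intro i _
      dsimp only
      by_cases hc : p i * f i = 0
      · rw [if_pos hc, zero_mul, hc]
      · rw [if_neg hc]
    · intro i hi
      dsimp only at hi ⊢
      by_cases hc : p i * f i = 0
      · rw [if_pos hc] at hi
        exact absurd rfl hi
      · rw [if_neg hc]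
        exact hdeg i hc

theorem redZ_zero {M : ℕ} (f : Fin M → MvPolynomial (Fin n) R) : RedZ m f 0 :=
  ⟨0, by simp, fun i hi => absurd rfl hi⟩

theorem redZ_neg {M : ℕ} {f : Fin M → MvPolynomial (Fin n) R} {g : MvPolynomial (Fin n) R}
    (h : RedZ m f g) : RedZ m f (-g) := by
  obtain ⟨p, hsum, hdeg⟩ := h
  refine ⟨fun i => -(p i), ?_, ?_⟩
  · rw [hsum, ← Finset.sum_neg_distrib]
    apply Finset.sum_congr rfl
    intro i _
    ring
  · intro i hi
    dsimp only at hi ⊢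
    rw [mDeg_neg, mDeg_neg]
    exact hdeg i (fun h0 => hi (by rw [h0, neg_zero]))

/-- Division: every element of an ideal with a Gröbner basis reduces to zero. -/
theorem redZ_of_mem {M : ℕ} {f : Fin M → MvPolynomial (Fin n) R}
    {I : Ideal (MvPolynomial (Fin n) R)} (hfI : ∀ i, f i ∈ I)
    (hspan : Ideal.span (Set.range fun i => mLT m (f i)) = mLTIdeal m I)
    {g : MvPolynomial (Fin n) R} (hg : g ∈ I) : RedZ m f g := by
  classical
  suffices H : ∀ δ : m.syn, ∀ g, g ∈ I → m.toSyn (mDeg m g) = δ → RedZ m f g from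
    H _ g hg rfl
  intro δ
  induction δ using WellFoundedLT.induction with
  | _ δ IH =>
  intro g hgI hdeg
  by_cases hg0 : g = 0
  · rw [hg0]; exact redZ_zero m f
  have hLT : mLT m g ∈ mLTIdeal m I := Ideal.subset_span ⟨g, ⟨hgI, hg0⟩, rfl⟩
  rw [← hspan, Ideal.mem_span_range_iff_exists_fun] at hLT
  obtain ⟨q, hq⟩ := hLT
  have hcoeff : mLC m g = ∑ i, (if mDeg m (f i) ≤ mDeg m g then
      MvPolynomial.coeff (mDeg m g - mDeg m (f i)) (q i) * mLC m (f i) else 0) := by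
    have hc := congrArg (MvPolynomial.coeff (mDeg m g)) hq
    rw [MvPolynomial.coeff_sum] at hc
    rw [mLT, MvPolynomial.coeff_monomial, if_pos rfl] at hc
    rw [← hc]
    apply Finset.sum_congr rfl
    intro i _
    rw [mLT, MvPolynomial.coeff_mul_monomial']
  set r : Fin M → MvPolynomial (Fin n) R := fun i =>
    if h : mDeg m (f i) ≤ mDeg m g then
      monomial (mDeg m g - mDeg m (f i))
        (MvPolynomial.coeff (mDeg m g - mDeg m (f i)) (q i))
    else 0 with hr_def
  have hrc : MvPolynomial.coeff (mDeg m g) (∑ i, r i * f i) = mLC m g := by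
    rw [MvPolynomial.coeff_sum, hcoeff]
    apply Finset.sum_congr rfl
    intro i _
    simp only [hr_def]
    by_cases h : mDeg m (f i) ≤ mDeg m g
    · rw [dif_pos h, if_pos h, mul_comm (monomial _ _) (f i),
        MvPolynomial.coeff_mul_monomial', if_pos (tsub_le_self),
        tsub_tsub_cancel_of_le h, mul_comm]
      rfl
    · rw [dif_neg h, if_neg h, zero_mul, MvPolynomial.coeff_zero]
  have hrdeg : ∀ i, r i ≠ 0 → m.toSyn (mDeg m (r i) + mDeg m (f i)) ≤ m.toSyn (mDeg m g) := by
    intro i hri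
    simp only [hr_def] at hri ⊢
    by_cases h : mDeg m (f i) ≤ mDeg m g
    · rw [dif_pos h] at hri ⊢
      rw [map_add]
      calc m.toSyn (mDeg m (monomial (mDeg m g - mDeg m (f i))
            (MvPolynomial.coeff (mDeg m g - mDeg m (f i)) (q i)))) + m.toSyn (mDeg m (f i))
          ≤ m.toSyn (mDeg m g - mDeg m (f i)) + m.toSyn (mDeg m (f i)) := by
            exact add_le_add_left (mDeg_monomial_le m _ _) _
        _ = m.toSyn (mDeg m g) := by rw [← map_add, tsub_add_cancel_of_le h]
    · rw [dif_neg h] at hri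
      exact absurd rfl hri
  have hmul_deg : ∀ i, m.toSyn (mDeg m (r i * f i)) ≤ m.toSyn (mDeg m g) := by
    intro i
    by_cases hri : r i = 0
    · rw [hri, zero_mul, mDeg_zero, map_zero]
      have : ((0:m.syn)) = ⊥ := rfl
      rw [this]
      exact bot_le
    · exact le_trans (mDeg_mul_le m _ _) (by rw [← map_add]; exact hrdeg i hri)
  set h2 : MvPolynomial (Fin n) R := g - ∑ i, r i * f i with hh2_def
  have hh2I : h2 ∈ I :=
    Ideal.sub_mem _ hgI (Ideal.sum_mem _ fun i _ => Ideal.mul_mem_left _ _ (hfI i))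
  have hsupp : ∀ d ∈ h2.support, m.toSyn d ≤ m.toSyn (mDeg m g) ∧ d ≠ mDeg m g := by
    intro d hd
    constructor
    · rw [MvPolynomial.mem_support_iff, hh2_def, MvPolynomial.coeff_sub] at hd
      by_cases h1 : MvPolynomial.coeff d g ≠ 0
      · exact le_mDeg m (MvPolynomial.mem_support_iff.2 h1)
      · push_neg at h1
        rw [h1, zero_sub, neg_ne_zero] at hd
        have : m.toSyn d ≤ m.toSyn (mDeg m (∑ i, r i * f i)) :=
          le_mDeg m (MvPolynomial.mem_support_iff.2 hd)
        exact le_trans this (mDeg_sum_le m (fun i _ => hmul_deg i))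
    · intro hEq
      rw [MvPolynomial.mem_support_iff, hh2_def, hEq, MvPolynomial.coeff_sub, hrc] at hd
      exact hd (by rw [mLC, sub_self])
  by_cases hh20 : h2 = 0
  · exact ⟨r, sub_eq_zero.mp (hh2_def.symm.trans hh20), hrdeg⟩
  · have hlt : m.toSyn (mDeg m h2) < δ := by
      obtain ⟨hle, hne⟩ := hsupp _ (mDeg_mem m hh20)
      rw [← hdeg]
      exact lt_of_le_of_ne hle (fun hEq => hne (m.toSyn.injective hEq))
    obtain ⟨p, hpsum, hpdeg⟩ := IH _ hlt h2 hh2I rfl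
    refine ⟨fun i => p i + r i, ?_, ?_⟩
    · have : g = h2 + ∑ i, r i * f i := by rw [hh2_def]; ring
      rw [this, hpsum, ← Finset.sum_add_distrib]
      apply Finset.sum_congr rfl
      intro i _
      ring
    · intro i hne
      apply guard_add_le m _ (hrdeg i) hne
      intro hp0
      exact le_trans (hpdeg i hp0) (le_of_lt (by rw [hdeg] at *; exact hlt))

end Ring


section SyzHelpers

variable {k : ℕ} {R : Type*} [CommRing R]

theorem prod_pow_mul_prod_pow (s : Fin k → R) (β γ : Fin k → ℕ) (h : ∀ v, β v ≤ γ v) :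
    (∏ v, s v ^ (γ v - β v)) * ∏ v, s v ^ β v = ∏ v, s v ^ γ v := by
  rw [← Finset.prod_mul_distrib]
  apply Finset.prod_congr rfl
  intro v _
  rw [← pow_add, Nat.sub_add_cancel (h v)]

theorem prod_pow_succ (s : Fin k → R) (t : Fin k) (β β' : Fin k → ℕ)
    (hne : ∀ v, v ≠ t → β v = β' v) (ht : β t = β' t + 1) :
    (∏ v, s v ^ β v) = s t * ∏ v, s v ^ β' v := by
  rw [← Finset.mul_prod_erase Finset.univ (fun v => s v ^ β v) (Finset.mem_univ t),
      ← Finset.mul_prod_erase Finset.univ (fun v => s v ^ β' v) (Finset.mem_univ t)]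
  rw [ht, pow_succ, ← mul_assoc, mul_comm (s t) (s t ^ β' t), mul_assoc, mul_assoc]
  congr 1
  congr 1
  apply Finset.prod_congr rfl
  intro v hv
  rw [hne v (Finset.mem_erase.mp hv).1]

theorem sum_sq_split {ι : Type*} [LinearOrder ι] {A : Type*} [AddCommMonoid A]
    (T : Finset ι) (F : ι → ι → A) (hdiag : ∀ i ∈ T, F i i = 0) :
    ∑ i ∈ T, ∑ j ∈ T, F i j =
      ∑ p ∈ (T ×ˢ T).filter (fun p => p.1 < p.2), (F p.1 p.2 + F p.2 p.1) := by
  classical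
  rw [← Finset.sum_product']
  rw [← Finset.sum_filter_add_sum_filter_not (T ×ˢ T) (fun p => p.1 < p.2)
    (fun p => F p.1 p.2)]
  have h2 : ∑ p ∈ (T ×ˢ T).filter (fun p => ¬ p.1 < p.2), F p.1 p.2
      = ∑ p ∈ (T ×ˢ T).filter (fun p => p.1 < p.2), F p.2 p.1 := by
    rw [← Finset.sum_filter_add_sum_filter_not
      ((T ×ˢ T).filter (fun p => ¬ p.1 < p.2)) (fun p => p.2 < p.1) (fun p => F p.1 p.2)]
    have hz : ∑ p ∈ ((T ×ˢ T).filter (fun p => ¬ p.1 < p.2)).filter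
        (fun p => ¬ p.2 < p.1), F p.1 p.2 = 0 := by
      apply Finset.sum_eq_zero
      intro p hp
      rw [Finset.mem_filter] at hp
      obtain ⟨hp1, hp2⟩ := hp
      rw [Finset.mem_filter, Finset.mem_product] at hp1
      have heq : p.1 = p.2 := le_antisymm (not_lt.mp hp2) (not_lt.mp hp1.2)
      rw [← heq]
      exact hdiag p.1 hp1.1.1
    rw [hz, add_zero]
    have hset : ((T ×ˢ T).filter (fun p => ¬ p.1 < p.2)).filter (fun p => p.2 < p.1)
        = (T ×ˢ T).filter (fun p => p.2 < p.1) := by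
      rw [Finset.filter_filter]
      apply Finset.filter_congr
      intro p _
      constructor
      · exact fun h => h.2
      · exact fun h => ⟨asymm h, h⟩
    rw [hset]
    apply Finset.sum_nbij' (fun p => Prod.swap p) (fun p => Prod.swap p)
    · intro p hp
      rw [Finset.mem_filter, Finset.mem_product] at hp ⊢
      exact ⟨⟨hp.1.2, hp.1.1⟩, hp.2⟩
    · intro p hp
      rw [Finset.mem_filter, Finset.mem_product] at hp ⊢
      exact ⟨⟨hp.1.2, hp.1.1⟩, hp.2⟩
    · intro p _; rfl
    · intro p _; rfl
    · intro p _; rfl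
  rw [h2, ← Finset.sum_add_distrib]

theorem antisym_sum_zero {ι : Type*} [LinearOrder ι] {A : Type*} [AddCommGroup A]
    (T : Finset ι) (F : ι → ι → A) (hanti : ∀ i j, F i j = - F j i)
    (hdiag : ∀ i, F i i = 0) :
    ∑ i ∈ T, ∑ j ∈ T, F i j = 0 := by
  rw [sum_sq_split T F (fun i _ => hdiag i)]
  apply Finset.sum_eq_zero
  intro p _
  rw [hanti p.1 p.2]
  exact neg_add_cancel _

theorem exists_perm_initial {k : ℕ} (E : Finset (Fin k)) (t : Fin k) (ht : t ∉ E) :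
    ∃ (σ : Equiv.Perm (Fin k)) (i : Fin k), σ i = t ∧ σ '' {j | j < i} = ↑E := by
  classical
  have hnodup : (E.sort (· ≤ ·) ++ t :: (insert t E)ᶜ.sort (· ≤ ·)).Nodup := by
    rw [List.nodup_append]
    refine ⟨Finset.sort_nodup _ _, ?_, ?_⟩
    · refine List.Nodup.cons ?_ (Finset.sort_nodup _ _)
      intro hmem
      rw [Finset.mem_sort, Finset.mem_compl] at hmem
      exact hmem (Finset.mem_insert_self t E)
    · intro x hx y hx2 hxy
      subst hxy
      rw [Finset.mem_sort] at hx
      rcases List.mem_cons.mp hx2 with rfl | hx2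
      · exact ht hx
      · rw [Finset.mem_sort, Finset.mem_compl] at hx2
        exact hx2 (Finset.mem_insert_of_mem hx)
  have hcard : E.card + 1 ≤ k := by
    have h2 : (insert t E).card ≤ Fintype.card (Fin k) := Finset.card_le_univ _
    rwa [Finset.card_insert_of_notMem ht, Fintype.card_fin] at h2
  have hlen : (E.sort (· ≤ ·) ++ t :: (insert t E)ᶜ.sort (· ≤ ·)).length = k := by
    simp only [List.length_append, Finset.length_sort, List.length_cons,
      Finset.card_compl, Finset.card_insert_of_notMem ht, Fintype.card_fin]
    omega
  have hcompl : ∀ x : Fin k, x ∈ (E.sort (· ≤ ·) ++ t :: (insert t E)ᶜ.sort (· ≤ ·)) := by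
    intro x
    rw [List.mem_append]
    by_cases hxE : x ∈ E
    · exact Or.inl ((Finset.mem_sort _).2 hxE)
    · right
      rw [List.mem_cons]
      by_cases hxt : x = t
      · exact Or.inl hxt
      · right
        rw [Finset.mem_sort, Finset.mem_compl, Finset.mem_insert]
        push_neg
        exact ⟨hxt, hxE⟩
  let e := List.Nodup.getEquivOfForallMemList _ hnodup hcompl
  let σ : Equiv.Perm (Fin k) := (finCongr hlen.symm).trans e
  have hσ : ∀ j : Fin k, σ j =
      (E.sort (· ≤ ·) ++ t :: (insert t E)ᶜ.sort (· ≤ ·))[j.val]'(by rw [hlen]; exact j.isLt) :=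
    fun j => rfl
  have hEc : E.card < k := by omega
  refine ⟨σ, ⟨E.card, hEc⟩, ?_, ?_⟩
  · rw [hσ]
    rw [List.getElem_append_right (by simp [Finset.length_sort])]
    simp
  · ext x
    simp only [Set.mem_image, Set.mem_setOf_eq, Finset.mem_coe]
    constructor
    · rintro ⟨j, hj, rfl⟩
      have hjv : j.val < E.card := hj
      rw [hσ]
      rw [List.getElem_append_left (by rw [Finset.length_sort]; exact hjv)]
      rw [← Finset.mem_sort (α := Fin k) (· ≤ ·)]
      exact List.getElem_mem _
    · intro hx
      have hx2 : x ∈ E.sort (· ≤ ·) := (Finset.mem_sort _).2 hx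
      obtain ⟨idx, hidx, hval⟩ := List.mem_iff_getElem.mp hx2
      rw [Finset.length_sort] at hidx
      refine ⟨⟨idx, by omega⟩, hidx, ?_⟩
      rw [hσ]
      rw [List.getElem_append_left (by rw [Finset.length_sort]; exact hidx)]
      exact hval

theorem wreg_step {k : ℕ} {s : Fin k → R} (hs : IsPermutableWeakRegularSeq s)
    {E : Finset (Fin k)} {t : Fin k} (ht : t ∉ E) {x : R}
    (h : s t * x ∈ Ideal.span (s '' ↑E)) : x ∈ Ideal.span (s '' ↑E) := by
  obtain ⟨σ, i, hσi, hσE⟩ := exists_perm_initial E t ht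
  have himg : (s ∘ σ) '' {j | j < i} = s '' ↑E := by
    rw [Set.image_comp, hσE]
  have := hs.2 σ i x
  rw [himg, Function.comp_apply, hσi] at this
  exact this h


/-- The key syzygy lemma. -/
theorem syz_lemma {k : ℕ} {R : Type*} [CommRing R] {s : Fin k → R}
    (hs : IsPermutableWeakRegularSeq s) {ι : Type*} [LinearOrder ι] :
    ∀ (N : ℕ) (T : Finset ι) (α : ι → Fin k → ℕ) (a : ι → R) (E : Finset (Fin k)),
      (∑ i ∈ T, ∑ v, α i v) = N →
      (∀ i ∈ T, ∀ j ∈ E, α i j = 0) →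
      (∑ i ∈ T, a i * ∏ v, s v ^ α i v) ∈ Ideal.span (s '' ↑E) →
      ∃ lam : ι → ι → R, (∀ i j, lam i j = - lam j i) ∧ (∀ i, lam i i = 0) ∧
        ∀ i ∈ T, a i - ∑ j ∈ T, lam i j * ∏ v, s v ^ (max (α i v) (α j v) - α i v)
          ∈ Ideal.span (s '' ↑E) := by
  intro N
  induction N using Nat.strong_induction_on with
  | _ N IH =>
  intro T α a E hN hα hmem
  classical
  by_cases hbase : ∀ i ∈ T, ∀ v, α i v = 0
  · -- base case: all monomials are 1
    rcases T.eq_empty_or_nonempty with rfl | ⟨i0, hi0⟩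
    · exact ⟨0, by simp, by simp, by simp⟩
    refine ⟨fun i j => (if j = i0 ∧ i ∈ T ∧ i ≠ i0 then a i else 0)
        - (if i = i0 ∧ j ∈ T ∧ j ≠ i0 then a j else 0), ?_, ?_, ?_⟩
    · intro i j
      dsimp only
      rw [neg_sub]
    · intro i
      have hc1 : ¬(i = i0 ∧ i ∈ T ∧ i ≠ i0) := fun h => h.2.2 h.1
      dsimp only
      rw [if_neg hc1]
      exact sub_self _
    · intro i hiT
      have hone : ∀ j ∈ T, (∏ v, s v ^ (max (α i v) (α j v) - α i v)) = 1 := by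
        intro j hjT
        apply Finset.prod_eq_one
        intro v _
        rw [hbase i hiT v, hbase j hjT v]
        simp
      have hsum1 : ∑ j ∈ T, ((if j = i0 ∧ i ∈ T ∧ i ≠ i0 then a i else 0)
            - (if i = i0 ∧ j ∈ T ∧ j ≠ i0 then a j else 0))
            * ∏ v, s v ^ (max (α i v) (α j v) - α i v)
          = ∑ j ∈ T, ((if j = i0 ∧ i ∈ T ∧ i ≠ i0 then a i else 0)
            - (if i = i0 ∧ j ∈ T ∧ j ≠ i0 then a j else 0)) := by
        apply Finset.sum_congr rfl
        intro j hjT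
        rw [hone j hjT, mul_one]
      rw [hsum1]
      by_cases hii : i = i0
      · subst hii
        have hstep : ∑ j ∈ T, ((if j = i ∧ i ∈ T ∧ i ≠ i then a i else 0)
              - (if i = i ∧ j ∈ T ∧ j ≠ i then a j else 0))
            = a i - ∑ j ∈ T, a j := by
          have hterm : ∀ j ∈ T, ((if j = i ∧ i ∈ T ∧ i ≠ i then a i else 0)
              - (if i = i ∧ j ∈ T ∧ j ≠ i then a j else 0))
              = (if j = i then a j else 0) - a j := by
            intro j hjT
            rw [if_neg (fun h : j = i ∧ i ∈ T ∧ i ≠ i => h.2.2 rfl)]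
            by_cases hji : j = i
            · simp [hji]
            · rw [if_neg hji, if_pos ⟨rfl, hjT, hji⟩]
          rw [Finset.sum_congr rfl hterm, Finset.sum_sub_distrib,
            Finset.sum_ite_eq' T i a, if_pos hiT]
        rw [hstep]
        have hfin : a i - (a i - ∑ j ∈ T, a j) = ∑ j ∈ T, a j := by ring
        rw [hfin]
        have hmem1 : ∑ j ∈ T, a j * ∏ v, s v ^ α j v = ∑ j ∈ T, a j := by
          apply Finset.sum_congr rfl
          intro j hjT
          have hpr : (∏ v, s v ^ α j v) = 1 :=
            Finset.prod_eq_one (fun v _ => by rw [hbase j hjT v, pow_zero])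
          rw [hpr, mul_one]
        rw [← hmem1]
        exact hmem
      · have hstep : ∑ j ∈ T, ((if j = i0 ∧ i ∈ T ∧ i ≠ i0 then a i else 0)
              - (if i = i0 ∧ j ∈ T ∧ j ≠ i0 then a j else 0)) = a i := by
          have hterm : ∀ j ∈ T, ((if j = i0 ∧ i ∈ T ∧ i ≠ i0 then a i else 0)
              - (if i = i0 ∧ j ∈ T ∧ j ≠ i0 then a j else 0))
              = (if j = i0 then a i else 0) := by
            intro j hjT
            rw [if_neg (fun h : i = i0 ∧ j ∈ T ∧ j ≠ i0 => hii h.1), sub_zero]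
            by_cases hji : j = i0
            · rw [if_pos ⟨hji, hiT, hii⟩, if_pos hji]
            · rw [if_neg (fun h : j = i0 ∧ i ∈ T ∧ i ≠ i0 => hji h.1), if_neg hji]
          rw [Finset.sum_congr rfl hterm, Finset.sum_ite_eq' T i0 (fun _ => a i),
            if_pos hi0]
        rw [hstep, sub_self]
        exact Submodule.zero_mem _
  -- inductive step
  push_neg at hbase
  obtain ⟨i1, hi1T, t, ht1⟩ := hbase
  have htE : t ∉ E := fun hmemE => ht1 (hα i1 hi1T t hmemE)
  set T0 := T.filter (fun i => α i t = 0) with hT0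
  set Tp := T.filter (fun i => ¬ α i t = 0) with hTp
  have hi1Tp : i1 ∈ Tp := Finset.mem_filter.2 ⟨hi1T, ht1⟩
  set α' : ι → Fin k → ℕ := fun i v => if i ∈ Tp ∧ v = t then α i v - 1 else α i v with hα'
  have hα'ne : ∀ i v, v ≠ t → α' i v = α i v := by
    intro i v hv
    simp only [hα']
    rw [if_neg (fun h => hv h.2)]
  have hα'tp : ∀ i ∈ Tp, α' i t = α i t - 1 := by
    intro i hi
    simp [hα', hi]
  have hα'T0 : ∀ i, i ∉ Tp → ∀ v, α' i v = α i v := by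
    intro i hi v
    simp only [hα']
    rw [if_neg (fun h => hi h.1)]
  have hα'le : ∀ i v, α' i v ≤ α i v := by
    intro i v
    simp only [hα']
    split
    · omega
    · exact le_refl _
  have hTpne : ∀ i ∈ Tp, α i t ≠ 0 := fun i hi => (Finset.mem_filter.mp hi).2
  have hsplit : ∀ i ∈ Tp, (∏ v, s v ^ α i v) = s t * ∏ v, s v ^ α' i v := by
    intro i hiTp
    apply prod_pow_succ s t
    · intro v hv
      rw [hα'ne i v hv]
    · rw [hα'tp i hiTp]
      have := hTpne i hiTp
      omega
  have hT0c : ∀ i ∈ T, i ∉ Tp → i ∈ T0 := by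
    intro i hiT hip
    rw [hT0, Finset.mem_filter]
    refine ⟨hiT, ?_⟩
    by_contra hc
    exact hip (Finset.mem_filter.2 ⟨hiT, hc⟩)
  have hT0e : ∀ i ∈ T0, α i t = 0 := fun i hi => (Finset.mem_filter.mp hi).2
  have hexp_p : ∀ i ∈ Tp, ∀ j ∈ T, ∀ v,
      max (α' i v) (α' j v) - α' i v = max (α i v) (α j v) - α i v := by
    intro i hiTp j hjT v
    have hi0 : α i t ≠ 0 := hTpne i hiTp
    by_cases hv : v = t
    · subst hv
      rw [hα'tp i hiTp]
      by_cases hj : j ∈ Tp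
      · rw [hα'tp j hj]
        have hj0 := hTpne j hj
        omega
      · rw [hα'T0 j hj v]
        have hj0 : α j v = 0 := hT0e j (hT0c j hjT hj)
        omega
    · rw [hα'ne i v hv, hα'ne j v hv]
  have hNlt : (∑ i ∈ T, ∑ v, α' i v) < N := by
    rw [← hN]
    apply Finset.sum_lt_sum
    · intro i _
      exact Finset.sum_le_sum (fun v _ => hα'le i v)
    · refine ⟨i1, hi1T, ?_⟩
      apply Finset.sum_lt_sum
      · intro v _
        exact hα'le i1 v
      · refine ⟨t, Finset.mem_univ t, ?_⟩
        rw [hα'tp i1 hi1Tp]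
        have := hTpne i1 hi1Tp
        omega
  have hα'E : ∀ i ∈ T, ∀ j ∈ E, α' i j = 0 := by
    intro i hiT j hjE
    rw [hα'ne i j (fun h => htE (h ▸ hjE))]
    exact hα i hiT j hjE
  rcases T0.eq_empty_or_nonempty with hT0emp | hT0ne
  · -- all indices have positive exponent at t : divide by s t
    have hTeq : ∀ i ∈ T, i ∈ Tp := by
      intro i hiT
      by_contra hc
      have := hT0c i hiT hc
      rw [hT0emp] at this
      exact absurd this (Finset.notMem_empty i)
    have hmem' : (∑ i ∈ T, a i * ∏ v, s v ^ α' i v) ∈ Ideal.span (s '' ↑E) := by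
      apply wreg_step hs htE
      have hEq : ∑ i ∈ T, a i * ∏ v, s v ^ α i v
          = s t * ∑ i ∈ T, a i * ∏ v, s v ^ α' i v := by
        rw [Finset.mul_sum]
        apply Finset.sum_congr rfl
        intro i hiT
        rw [hsplit i (hTeq i hiT)]
        ring
      rw [← hEq]
      exact hmem
    obtain ⟨lam, h1, h2, h3⟩ := IH _ hNlt T α' a E rfl hα'E hmem'
    refine ⟨lam, h1, h2, ?_⟩
    intro i hiT
    have heq : ∑ j ∈ T, lam i j * ∏ v, s v ^ (max (α i v) (α j v) - α i v)
        = ∑ j ∈ T, lam i j * ∏ v, s v ^ (max (α' i v) (α' j v) - α' i v) := by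
      apply Finset.sum_congr rfl
      intro j hjT
      congr 1
      apply Finset.prod_congr rfl
      intro v _
      rw [hexp_p i (hTeq i hiT) j hjT v]
    rw [heq]
    exact h3 i hiT
  · -- mixed case
    have hTsplit : ∀ (F : ι → R), ∑ i ∈ T, F i = ∑ i ∈ T0, F i + ∑ i ∈ Tp, F i := by
      intro F
      rw [hT0, hTp, Finset.sum_filter_add_sum_filter_not]
    have hEJ' : Ideal.span (s '' ↑E) ≤ Ideal.span (s '' ↑(insert t E)) := by
      apply Ideal.span_mono
      apply Set.image_mono
      rw [Finset.coe_insert]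
      exact Set.subset_insert t ↑E
    have hstJ' : s t ∈ Ideal.span (s '' ↑(insert t E)) :=
      Ideal.subset_span ⟨t, by simp, rfl⟩
    have hmem0 : (∑ i ∈ T0, a i * ∏ v, s v ^ α i v)
        ∈ Ideal.span (s '' ↑(insert t E)) := by
      have h1 : ∑ i ∈ T0, a i * ∏ v, s v ^ α i v
          = (∑ i ∈ T, a i * ∏ v, s v ^ α i v)
            - s t * ∑ i ∈ Tp, a i * ∏ v, s v ^ α' i v := by
        rw [hTsplit (fun i => a i * ∏ v, s v ^ α i v), Finset.mul_sum]
        have h2 : ∑ i ∈ Tp, s t * (a i * ∏ v, s v ^ α' i v)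
            = ∑ i ∈ Tp, a i * ∏ v, s v ^ α i v :=
          Finset.sum_congr rfl (fun i hi => by rw [hsplit i hi]; ring)
        rw [h2]
        ring
      rw [h1]
      exact Submodule.sub_mem _ (hEJ' hmem) (Ideal.mul_mem_right _ _ hstJ')
    have hN0 : (∑ i ∈ T0, ∑ v, α i v) < N := by
      have hTple : 1 ≤ ∑ i ∈ Tp, ∑ v, α i v := by
        have h1 : 1 ≤ ∑ v, α i1 v := by
          have h2 : 1 ≤ α i1 t := by
            have := hTpne i1 hi1Tp
            omega
          exact le_trans h2 (Finset.single_le_sum (fun v _ => Nat.zero_le _)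
            (Finset.mem_univ t))
        exact le_trans h1 (Finset.single_le_sum (f := fun i => ∑ v, α i v)
          (fun i _ => Nat.zero_le _) hi1Tp)
      have hsplitN : ∑ i ∈ T, ∑ v, α i v
          = ∑ i ∈ T0, ∑ v, α i v + ∑ i ∈ Tp, ∑ v, α i v := by
        rw [hT0, hTp, Finset.sum_filter_add_sum_filter_not]
      omega
    have hα0 : ∀ i ∈ T0, ∀ j ∈ insert t E, α i j = 0 := by
      intro i hiT0 j hj
      rcases Finset.mem_insert.mp hj with rfl | hjE
      · exact hT0e i hiT0
      · exact hα i (Finset.mem_filter.mp hiT0).1 j hjE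
    obtain ⟨lam0, h0a, h0d, h0m⟩ := IH _ hN0 T0 α a (insert t E) rfl hα0 hmem0
    have hdecomp : ∀ i, i ∈ T0 → ∃ yy ww, ww ∈ Ideal.span (s '' ↑E) ∧
        a i - (∑ j ∈ T0, lam0 i j * ∏ v, s v ^ (max (α i v) (α j v) - α i v))
          = s t * yy + ww := by
      intro i hiT0
      have hmm := h0m i hiT0
      rw [Finset.coe_insert, Set.image_insert_eq, Ideal.span_insert] at hmm
      obtain ⟨z, hz, ww, hww, hzw⟩ := Submodule.mem_sup.mp hmm
      obtain ⟨yy, hy⟩ := Ideal.mem_span_singleton'.mp hz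
      exact ⟨yy, ww, hww, by rw [← hzw, ← hy]; ring⟩
    choose! y w hw hyw using hdecomp
    set atil : ι → R := fun i => if α i t = 0 then y i else a i with hatil
    have hatil0 : ∀ i ∈ T0, atil i = y i := by
      intro i hi
      simp only [hatil]
      rw [if_pos (hT0e i hi)]
    have hatilp : ∀ i ∈ Tp, atil i = a i := by
      intro i hi
      simp only [hatil]
      rw [if_neg (hTpne i hi)]
    have hzero : (∑ i ∈ T0, ∑ j ∈ T0,
        (lam0 i j * ∏ v, s v ^ (max (α i v) (α j v) - α i v)) * ∏ v, s v ^ α i v) = 0 := by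
      apply antisym_sum_zero
      · intro i j
        have hij : (lam0 i j * ∏ v, s v ^ (max (α i v) (α j v) - α i v)) * ∏ v, s v ^ α i v
            = lam0 i j * ∏ v, s v ^ (max (α i v) (α j v)) := by
          rw [mul_assoc, prod_pow_mul_prod_pow s _ _ (fun v => Nat.le_max_left _ _)]
        have hji : (lam0 j i * ∏ v, s v ^ (max (α j v) (α i v) - α j v)) * ∏ v, s v ^ α j v
            = lam0 j i * ∏ v, s v ^ (max (α i v) (α j v)) := by
          rw [mul_assoc, prod_pow_mul_prod_pow s _ _ (fun v => Nat.le_max_left _ _)]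
          congr 1
          apply Finset.prod_congr rfl
          intro v _
          rw [Nat.max_comm]
        rw [hij, hji, h0a i j]
        ring
      · intro i
        rw [h0d i, zero_mul, zero_mul]
    have hZmem : (∑ i ∈ T, atil i * ∏ v, s v ^ α' i v) ∈ Ideal.span (s '' ↑E) := by
      apply wreg_step hs htE
      have hkey : s t * (∑ i ∈ T, atil i * ∏ v, s v ^ α' i v)
          = (∑ i ∈ T, a i * ∏ v, s v ^ α i v)
            - (∑ i ∈ T0, ∑ j ∈ T0,
                (lam0 i j * ∏ v, s v ^ (max (α i v) (α j v) - α i v)) * ∏ v, s v ^ α i v)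
            - (∑ i ∈ T0, w i * ∏ v, s v ^ α i v) := by
        rw [Finset.mul_sum, hTsplit (fun i => s t * (atil i * ∏ v, s v ^ α' i v))]
        have e1 : ∑ i ∈ T0, s t * (atil i * ∏ v, s v ^ α' i v)
            = ∑ i ∈ T0, ((a i * ∏ v, s v ^ α i v)
                - (∑ j ∈ T0, (lam0 i j * ∏ v, s v ^ (max (α i v) (α j v) - α i v))
                    * ∏ v, s v ^ α i v)
                - w i * ∏ v, s v ^ α i v) := by
          apply Finset.sum_congr rfl
          intro i hi
          have hiTp : i ∉ Tp := fun hc => hTpne i hc (hT0e i hi)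
          have hprod : ∏ v, s v ^ α' i v = ∏ v, s v ^ α i v :=
            Finset.prod_congr rfl (fun v _ => by rw [hα'T0 i hiTp v])
          have hsty : s t * y i
              = a i - (∑ j ∈ T0, lam0 i j * ∏ v, s v ^ (max (α i v) (α j v) - α i v))
                - w i := by
            linear_combination -(hyw i hi)
          rw [hatil0 i hi, hprod]
          have lhs1 : s t * (y i * ∏ v, s v ^ α i v)
              = (s t * y i) * ∏ v, s v ^ α i v := by ring
          rw [lhs1, hsty, ← Finset.sum_mul]
          ring
        have e2 : ∑ i ∈ Tp, s t * (atil i * ∏ v, s v ^ α' i v)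
            = ∑ i ∈ Tp, a i * ∏ v, s v ^ α i v := by
          apply Finset.sum_congr rfl
          intro i hi
          rw [hatilp i hi, hsplit i hi]
          ring
        rw [e1, e2, Finset.sum_sub_distrib, Finset.sum_sub_distrib,
          hTsplit (fun i => a i * ∏ v, s v ^ α i v)]
        ring
      rw [hkey, hzero, sub_zero]
      refine Submodule.sub_mem _ hmem (Submodule.sum_mem _ ?_)
      intro i hi
      exact Ideal.mul_mem_right _ _ (hw i hi)
    obtain ⟨lam1, h1a, h1d, h1m⟩ := IH _ hNlt T α' atil E rfl hα'E hZmem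
    refine ⟨fun i j => if i ∈ T0 ∧ j ∈ T0 then lam0 i j + s t * lam1 i j else lam1 i j,
      ?_, ?_, ?_⟩
    · intro i j
      dsimp only
      by_cases hc : i ∈ T0 ∧ j ∈ T0
      · rw [if_pos hc, if_pos ⟨hc.2, hc.1⟩, h0a i j, h1a i j]
        ring
      · rw [if_neg hc, if_neg (fun hh : j ∈ T0 ∧ i ∈ T0 => hc ⟨hh.2, hh.1⟩), h1a i j]
    · intro i
      dsimp only
      by_cases hc : i ∈ T0 ∧ i ∈ T0
      · rw [if_pos hc, h0d i, h1d i]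
        ring
      · rw [if_neg hc, h1d i]
    · intro i hiT
      dsimp only
      by_cases hiT0 : i ∈ T0
      · -- the T0 case
        have hit : α i t = 0 := hT0e i hiT0
        have hiTp : i ∉ Tp := fun hc => hTpne i hc hit
        have hX2 : ∀ j ∈ T0, (∏ v, s v ^ (max (α' i v) (α' j v) - α' i v))
            = ∏ v, s v ^ (max (α i v) (α j v) - α i v) := by
          intro j hj
          have hjTp : j ∉ Tp := fun hc => hTpne j hc (hT0e j hj)
          apply Finset.prod_congr rfl
          intro v _
          rw [hα'T0 i hiTp v, hα'T0 j hjTp v]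
        have hX3 : ∀ j ∈ Tp, (∏ v, s v ^ (max (α i v) (α j v) - α i v))
            = s t * ∏ v, s v ^ (max (α' i v) (α' j v) - α' i v) := by
          intro j hj
          apply prod_pow_succ s t
          · intro v hv
            rw [hα'T0 i hiTp v, hα'ne j v hv]
          · rw [hα'T0 i hiTp t, hα'tp j hj]
            have hj0 := hTpne j hj
            rw [hit]
            omega
        have key : a i - ∑ j ∈ T, (if i ∈ T0 ∧ j ∈ T0 then lam0 i j + s t * lam1 i j
              else lam1 i j) * ∏ v, s v ^ (max (α i v) (α j v) - α i v)
            = w i + s t * (atil i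
                - ∑ j ∈ T, lam1 i j * ∏ v, s v ^ (max (α' i v) (α' j v) - α' i v)) := by
          rw [hTsplit (fun j => (if i ∈ T0 ∧ j ∈ T0 then lam0 i j + s t * lam1 i j
              else lam1 i j) * ∏ v, s v ^ (max (α i v) (α j v) - α i v))]
          rw [hTsplit (fun j => lam1 i j * ∏ v, s v ^ (max (α' i v) (α' j v) - α' i v))]
          have eT0 : ∑ j ∈ T0, (if i ∈ T0 ∧ j ∈ T0 then lam0 i j + s t * lam1 i j
                else lam1 i j) * ∏ v, s v ^ (max (α i v) (α j v) - α i v)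
              = ∑ j ∈ T0, lam0 i j * ∏ v, s v ^ (max (α i v) (α j v) - α i v)
                + s t * ∑ j ∈ T0, lam1 i j * ∏ v, s v ^ (max (α' i v) (α' j v) - α' i v) := by
            rw [Finset.mul_sum, ← Finset.sum_add_distrib]
            apply Finset.sum_congr rfl
            intro j hj
            rw [if_pos ⟨hiT0, hj⟩, hX2 j hj]
            ring
          have eTp : ∑ j ∈ Tp, (if i ∈ T0 ∧ j ∈ T0 then lam0 i j + s t * lam1 i j
                else lam1 i j) * ∏ v, s v ^ (max (α i v) (α j v) - α i v)
              = s t * ∑ j ∈ Tp, lam1 i j * ∏ v, s v ^ (max (α' i v) (α' j v) - α' i v) := by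
            rw [Finset.mul_sum]
            apply Finset.sum_congr rfl
            intro j hj
            have hjT0 : j ∉ T0 := fun hc => hTpne j hj (hT0e j hc)
            rw [if_neg (fun h : i ∈ T0 ∧ j ∈ T0 => hjT0 h.2), hX3 j hj]
            ring
          rw [eT0, eTp]
          have hsty : s t * y i
              = a i - (∑ j ∈ T0, lam0 i j * ∏ v, s v ^ (max (α i v) (α j v) - α i v))
                - w i := by
            linear_combination -(hyw i hiT0)
          rw [hatil0 i hiT0]
          linear_combination -hsty
        rw [key]
        exact Submodule.add_mem _ (hw i hiT0) (Ideal.mul_mem_left _ _ (h1m i hiT))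
      · -- the Tp case
        have hiTp : i ∈ Tp := by
          by_contra hc
          exact hiT0 (hT0c i hiT hc)
        have heq : ∑ j ∈ T, (if i ∈ T0 ∧ j ∈ T0 then lam0 i j + s t * lam1 i j
              else lam1 i j) * ∏ v, s v ^ (max (α i v) (α j v) - α i v)
            = ∑ j ∈ T, lam1 i j * ∏ v, s v ^ (max (α' i v) (α' j v) - α' i v) := by
          apply Finset.sum_congr rfl
          intro j hj
          rw [if_neg (fun h : i ∈ T0 ∧ j ∈ T0 => hiT0 h.1)]
          congr 1
          apply Finset.prod_congr rfl
          intro v _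
          rw [hexp_p i hiTp j hj v]
        rw [heq, ← hatilp i hiTp]
        exact h1m i hiT

end SyzHelpers



section SPoly

variable {n k M : ℕ} {R : Type*} [CommRing R] (m : MonomialOrder (Fin n))
  (s : Fin k → R) (f : Fin M → MvPolynomial (Fin n) R) (c : Fin M → Rˣ)
  (α : Fin M → Fin k → ℕ)

theorem sspoly_self (i : Fin M) : sMonSPoly m s f c α i i = 0 := by
  unfold sMonSPoly
  exact sub_self _

theorem sspoly_swap (i j : Fin M) :
    sMonSPoly m s f c α j i = - sMonSPoly m s f c α i j := by
  unfold sMonSPoly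
  rw [neg_sub]
  have h1 : mDeg m (f j) ⊔ mDeg m (f i) = mDeg m (f i) ⊔ mDeg m (f j) := sup_comm _ _
  have h2 : ∀ l l' : Fin M, (∏ v, s v ^ (max (α l v) (α l' v) - α l v))
      = ∏ v, s v ^ (max (α l' v) (α l v) - α l v) :=
    fun l l' => Finset.prod_congr rfl (fun v _ => by rw [Nat.max_comm])
  rw [h1, h2 j i, ← h2 i j]

theorem sspoly_support_le {i j : Fin M} {d : Fin n →₀ ℕ}
    (hd : d ∈ (sMonSPoly m s f c α i j).support) :
    m.toSyn d ≤ m.toSyn (mDeg m (f i) ⊔ mDeg m (f j)) := by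
  classical
  have hbound : ∀ (l : Fin M) (x : R), d ∈ (MvPolynomial.monomial
      ((mDeg m (f i) ⊔ mDeg m (f j)) - mDeg m (f l)) x * f l).support →
      mDeg m (f l) ≤ mDeg m (f i) ⊔ mDeg m (f j) →
      m.toSyn d ≤ m.toSyn (mDeg m (f i) ⊔ mDeg m (f j)) := by
    intro l x hmem hle
    obtain ⟨u, hu, b, hb, rfl⟩ := mem_support_mul hmem
    have hu' : u = (mDeg m (f i) ⊔ mDeg m (f j)) - mDeg m (f l) := by
      have := MvPolynomial.support_monomial_subset hu
      simpa using this
    subst hu'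
    calc m.toSyn ((mDeg m (f i) ⊔ mDeg m (f j)) - mDeg m (f l) + b)
        = m.toSyn ((mDeg m (f i) ⊔ mDeg m (f j)) - mDeg m (f l)) + m.toSyn b := by
          rw [map_add]
      _ ≤ m.toSyn ((mDeg m (f i) ⊔ mDeg m (f j)) - mDeg m (f l)) + m.toSyn (mDeg m (f l)) :=
          add_le_add_right (le_mDeg m hb) _
      _ = m.toSyn (mDeg m (f i) ⊔ mDeg m (f j)) := by
          rw [← map_add, tsub_add_cancel_of_le hle]
  unfold sMonSPoly at hd
  rw [sub_eq_add_neg] at hd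
  have := MvPolynomial.support_add hd
  rcases Finset.mem_union.mp this with h | h
  · exact hbound i _ h le_sup_left
  · rw [MvPolynomial.support_neg] at h
    exact hbound j _ h le_sup_right

theorem sspoly_coeff_top (hlc : ∀ i, mLC m (f i) = ↑(c i) * ∏ t, s t ^ α i t) (i j : Fin M) :
    MvPolynomial.coeff (mDeg m (f i) ⊔ mDeg m (f j)) (sMonSPoly m s f c α i j) = 0 := by
  classical
  have hterm : ∀ (l : Fin M) (x : R), mDeg m (f l) ≤ mDeg m (f i) ⊔ mDeg m (f j) →
      MvPolynomial.coeff (mDeg m (f i) ⊔ mDeg m (f j))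
        (MvPolynomial.monomial ((mDeg m (f i) ⊔ mDeg m (f j)) - mDeg m (f l)) x * f l)
      = mLC m (f l) * x := by
    intro l x hle
    rw [mul_comm, MvPolynomial.coeff_mul_monomial', if_pos tsub_le_self,
      tsub_tsub_cancel_of_le hle]
    rfl
  unfold sMonSPoly
  rw [MvPolynomial.coeff_sub, hterm i _ le_sup_left, hterm j _ le_sup_right, hlc i, hlc j]
  have hval : ∀ (l l' : Fin M),
      (↑(c l) * ∏ v, s v ^ α l v) * (↑(c l)⁻¹ * ∏ v, s v ^ (max (α l v) (α l' v) - α l v))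
      = ∏ v, s v ^ (max (α l v) (α l' v)) := by
    intro l l'
    have h1 : (∏ v, s v ^ (max (α l v) (α l' v) - α l v)) * ∏ v, s v ^ α l v
        = ∏ v, s v ^ (max (α l v) (α l' v)) :=
      prod_pow_mul_prod_pow s _ _ (fun v => Nat.le_max_left _ _)
    calc (↑(c l) * ∏ v, s v ^ α l v) * (↑(c l)⁻¹ * ∏ v, s v ^ (max (α l v) (α l' v) - α l v))
        = (↑(c l) * ↑(c l)⁻¹) * ((∏ v, s v ^ (max (α l v) (α l' v) - α l v))
            * ∏ v, s v ^ α l v) := by ring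
      _ = ∏ v, s v ^ (max (α l v) (α l' v)) := by
          rw [Units.mul_inv, one_mul, h1]
  rw [hval i j]
  have h2 : (↑(c j) * ∏ v, s v ^ α j v) * (↑(c j)⁻¹ * ∏ v, s v ^ (max (α i v) (α j v) - α j v))
      = ∏ v, s v ^ (max (α i v) (α j v)) := by
    have e1 : (∏ v, s v ^ (max (α i v) (α j v) - α j v))
        = ∏ v, s v ^ (max (α j v) (α i v) - α j v) :=
      Finset.prod_congr rfl (fun v _ => by rw [Nat.max_comm])
    have e2 : (∏ v : Fin k, s v ^ (max (α i v) (α j v)))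
        = ∏ v, s v ^ (max (α j v) (α i v)) :=
      Finset.prod_congr rfl (fun v _ => by rw [Nat.max_comm])
    rw [e1, e2]
    exact hval j i
  rw [h2, sub_self]

theorem sspoly_deg_lt (hlc : ∀ i, mLC m (f i) = ↑(c i) * ∏ t, s t ^ α i t) {i j : Fin M}
    (hne : sMonSPoly m s f c α i j ≠ 0) :
    m.toSyn (mDeg m (sMonSPoly m s f c α i j)) < m.toSyn (mDeg m (f i) ⊔ mDeg m (f j)) := by
  have hmem := mDeg_mem m hne
  have hle := sspoly_support_le m s f c α hmem
  refine lt_of_le_of_ne hle (fun hEq => ?_)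
  have hdeq : mDeg m (sMonSPoly m s f c α i j) = mDeg m (f i) ⊔ mDeg m (f j) :=
    m.toSyn.injective hEq
  rw [MvPolynomial.mem_support_iff, hdeq] at hmem
  exact hmem (sspoly_coeff_top m s f c α hlc i j)

end SPoly



section Main

variable {n k M : ℕ} {R : Type*} [CommRing R] (m : MonomialOrder (Fin n))

theorem redZ_sspoly_all (s : Fin k → R) (f : Fin M → MvPolynomial (Fin n) R)
    (c : Fin M → Rˣ) (α : Fin M → Fin k → ℕ)
    (hred : ∀ i j : Fin M, i < j → ReducesToZero m f (sMonSPoly m s f c α i j)) :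
    ∀ i j : Fin M, RedZ m f (sMonSPoly m s f c α i j) := by
  intro i j
  rcases lt_trichotomy i j with h | h | h
  · exact (redZ_iff m f _).2 (hred i j h)
  · rw [h, sspoly_self]
    exact redZ_zero m f
  · rw [sspoly_swap]
    exact redZ_neg m ((redZ_iff m f _).2 (hred j i h))

/-- The hard direction: if all S'-polynomials reduce to zero, every leading term of the
ideal lies in the span of the leading terms of the basis. -/
theorem mLT_mem_span_of_sspoly {s : Fin k → R} (hs : IsPermutableWeakRegularSeq s)
    {f : Fin M → MvPolynomial (Fin n) R}
    {c : Fin M → Rˣ} {α : Fin M → Fin k → ℕ}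
    (hlc : ∀ i, mLC m (f i) = ↑(c i) * ∏ t, s t ^ α i t)
    (hred : ∀ i j : Fin M, RedZ m f (sMonSPoly m s f c α i j))
    {g : MvPolynomial (Fin n) R} (hgI : g ∈ Ideal.span (Set.range f)) (hg0 : g ≠ 0) :
    mLT m g ∈ Ideal.span (Set.range fun i => mLT m (f i)) := by
  classical
  set B : (Fin M → MvPolynomial (Fin n) R) → m.syn := fun p =>
    Finset.univ.sup (fun i => if p i = 0 then 0
      else m.toSyn (mDeg m (p i) + mDeg m (f i))) with hB
  have hRep : ∃ δ : m.syn, ∃ p, (∑ i, p i * f i = g) ∧ B p = δ := by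
    obtain ⟨p₀, hp₀⟩ := Ideal.mem_span_range_iff_exists_fun.mp hgI
    exact ⟨B p₀, p₀, hp₀, rfl⟩
  obtain ⟨δ, hδ, hmin⟩ := (wellFounded_lt (α := m.syn)).has_min
    {δ | ∃ p, (∑ i, p i * f i = g) ∧ B p = δ} (by obtain ⟨δ0, h0⟩ := hRep; exact ⟨δ0, h0⟩)
  obtain ⟨p, hpg, hpB⟩ := hδ
  have hBdef : ∀ pp : Fin M → MvPolynomial (Fin n) R,
      B pp = Finset.univ.sup (fun i => if pp i = 0 then 0
        else m.toSyn (mDeg m (pp i) + mDeg m (f i))) := fun pp => rfl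
  have hK1 : ∀ i, p i ≠ 0 → m.toSyn (mDeg m (p i) + mDeg m (f i)) ≤ δ := by
    intro i hp0
    rw [← hpB, hBdef p]
    have := Finset.le_sup (f := fun i => if p i = 0 then 0
      else m.toSyn (mDeg m (p i) + mDeg m (f i))) (Finset.mem_univ i)
    rwa [if_neg hp0] at this
  by_cases hcase : δ ≤ m.toSyn (mDeg m g)
  · -- Case A : the minimum representation has top degree ≤ deg g
    have hco : mLC m g = ∑ i, (if mDeg m g = mDeg m (p i) + mDeg m (f i) ∧ p i ≠ 0
        then mLC m (p i) * mLC m (f i) else 0) := by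
      have h1 := congrArg (MvPolynomial.coeff (mDeg m g)) hpg
      rw [MvPolynomial.coeff_sum] at h1
      rw [mLC, ← h1]
      apply Finset.sum_congr rfl
      intro i _
      by_cases hp0 : p i = 0
      · rw [if_neg (fun h : _ ∧ p i ≠ 0 => h.2 hp0), hp0, zero_mul, MvPolynomial.coeff_zero]
      · have hle : m.toSyn (mDeg m (p i)) + m.toSyn (mDeg m (f i))
            ≤ m.toSyn (mDeg m g) := by
          rw [← map_add]
          exact le_trans (hK1 i hp0) hcase
        rw [coeff_mul_top m hle]
        by_cases hc2 : mDeg m g = mDeg m (p i) + mDeg m (f i)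
        · rw [if_pos hc2, if_pos ⟨hc2, hp0⟩]
        · rw [if_neg hc2, if_neg (fun h => hc2 h.1)]
    rw [mLT, hco, map_sum]
    apply Submodule.sum_mem
    intro i _
    by_cases hc2 : mDeg m g = mDeg m (p i) + mDeg m (f i) ∧ p i ≠ 0
    · rw [if_pos hc2]
      have heq : (monomial (mDeg m g)) (mLC m (p i) * mLC m (f i))
          = monomial (mDeg m (p i)) (mLC m (p i)) * mLT m (f i) := by
        rw [mLT, MvPolynomial.monomial_mul, ← hc2.1]
      rw [heq]
      exact Ideal.mul_mem_left _ _ (Ideal.subset_span ⟨i, rfl⟩)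
    · rw [if_neg hc2, map_zero]
      exact Submodule.zero_mem _
  · -- Case B : contradiction with minimality
    exfalso
    push_neg at hcase
    have huniv : (Finset.univ : Finset (Fin M)).Nonempty := by
      by_contra hU
      rw [Finset.not_nonempty_iff_eq_empty] at hU
      have : B p = ⊥ := by rw [hBdef p, hU, Finset.sup_empty]
      rw [hpB] at this
      rw [this] at hcase
      exact not_lt_bot hcase
    obtain ⟨i0, _, hi0⟩ := Finset.exists_mem_eq_sup Finset.univ huniv
      (fun i => if p i = 0 then 0 else m.toSyn (mDeg m (p i) + mDeg m (f i)))
    have hp00 : p i0 ≠ 0 := by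
      intro h0
      have : δ = 0 := by rw [← hpB, hBdef p, hi0, if_pos h0]
      rw [this] at hcase
      exact not_lt_bot hcase
    have hδe : δ = m.toSyn (mDeg m (p i0) + mDeg m (f i0)) := by
      rw [← hpB, hBdef p, hi0, if_neg hp00]
    set e := mDeg m (p i0) + mDeg m (f i0) with he
    set T : Finset (Fin M) := Finset.univ.filter
      (fun i => p i ≠ 0 ∧ mDeg m (p i) + mDeg m (f i) = e) with hT
    have hTmem : ∀ i ∈ T, p i ≠ 0 ∧ mDeg m (p i) + mDeg m (f i) = e :=
      fun i hi => (Finset.mem_filter.mp hi).2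
    have hi0T : i0 ∈ T := Finset.mem_filter.2 ⟨Finset.mem_univ _, hp00, rfl⟩
    have hKe : ∀ i, p i ≠ 0 → m.toSyn (mDeg m (p i) + mDeg m (f i)) ≤ m.toSyn e := by
      intro i hp0
      rw [← hδe]
      exact hK1 i hp0
    have hnotT : ∀ i, i ∉ T → p i ≠ 0 →
        m.toSyn (mDeg m (p i) + mDeg m (f i)) < m.toSyn e := by
      intro i hiT hp0
      refine lt_of_le_of_ne (hKe i hp0) (fun hEq => hiT ?_)
      exact Finset.mem_filter.2 ⟨Finset.mem_univ _, hp0, m.toSyn.injective hEq⟩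
    have hge : m.toSyn (mDeg m g) < m.toSyn e := by rw [← hδe]; exact hcase
    -- the top coefficients form a syzygy
    have hc0 : ∑ i ∈ T, mLC m (p i) * mLC m (f i) = 0 := by
      have h1 : MvPolynomial.coeff e g = 0 := coeff_eq_zero_of_gt m hge
      have h2 := congrArg (MvPolynomial.coeff e) hpg
      rw [MvPolynomial.coeff_sum] at h2
      have h3 : ∀ i : Fin M, MvPolynomial.coeff e (p i * f i)
          = if i ∈ T then mLC m (p i) * mLC m (f i) else 0 := by
        intro i
        by_cases hp0 : p i = 0
        · rw [hp0, zero_mul, MvPolynomial.coeff_zero,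
            if_neg (fun hmem => (hTmem i hmem).1 hp0)]
        · rw [coeff_mul_top m (by rw [← map_add]; exact hKe i hp0)]
          by_cases hiT : i ∈ T
          · rw [if_pos ((hTmem i hiT).2).symm, if_pos hiT]
          · rw [if_neg (fun hEq : e = mDeg m (p i) + mDeg m (f i) =>
              hiT (Finset.mem_filter.2 ⟨Finset.mem_univ _, hp0, hEq.symm⟩)), if_neg hiT]
      rw [Finset.sum_congr rfl (fun i _ => h3 i), Finset.sum_ite_mem,
        Finset.univ_inter, h1] at h2
      exact h2
    -- syzygy lemma
    have hsyz_in : (∑ i ∈ T, (mLC m (p i) * ↑(c i)) * ∏ v, s v ^ α i v)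
        ∈ Ideal.span (s '' ↑(∅ : Finset (Fin k))) := by
      have heq : ∑ i ∈ T, (mLC m (p i) * ↑(c i)) * ∏ v, s v ^ α i v
          = ∑ i ∈ T, mLC m (p i) * mLC m (f i) := by
        apply Finset.sum_congr rfl
        intro i _
        rw [hlc i]
        ring
      rw [heq, hc0]
      exact Submodule.zero_mem _
    obtain ⟨lam, hanti, hdiag, hlam⟩ := syz_lemma hs _ T α
      (fun i => mLC m (p i) * ↑(c i)) ∅ rfl (by simp) hsyz_in
    have hlam' : ∀ i ∈ T, mLC m (p i) * ↑(c i)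
        = ∑ j ∈ T, lam i j * ∏ v, s v ^ (max (α i v) (α j v) - α i v) := by
      intro i hi
      have hmm := hlam i hi
      rw [Finset.coe_empty, Set.image_empty, Ideal.span_empty, Ideal.mem_bot] at hmm
      exact sub_eq_zero.mp hmm
    have hdfle : ∀ i ∈ T, mDeg m (f i) ≤ e := by
      intro i hi
      rw [← (hTmem i hi).2]
      exact le_add_self
    set P := (T ×ˢ T).filter (fun q : Fin M × Fin M => q.1 < q.2) with hP
    have hPT : ∀ pr : Fin M × Fin M, pr ∈ P → pr.1 ∈ T ∧ pr.2 ∈ T := by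
      intro pr hpr
      have := (Finset.mem_filter.mp hpr).1
      exact Finset.mem_product.mp this
    have hδle : ∀ pr : Fin M × Fin M, pr ∈ P →
        mDeg m (f pr.1) ⊔ mDeg m (f pr.2) ≤ e := by
      intro pr hpr
      exact sup_le (hdfle pr.1 (hPT pr hpr).1) (hdfle pr.2 (hPT pr hpr).2)
    -- choose reduction data for each S'-polynomial
    have hq : ∀ i j : Fin M, ∃ qq : Fin M → MvPolynomial (Fin n) R,
        sMonSPoly m s f c α i j = ∑ t', qq t' * f t' ∧
        (∀ t', qq t' ≠ 0 → sMonSPoly m s f c α i j ≠ 0 ∧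
          m.toSyn (mDeg m (qq t') + mDeg m (f t'))
            ≤ m.toSyn (mDeg m (sMonSPoly m s f c α i j))) := by
      intro i j
      by_cases hS0 : sMonSPoly m s f c α i j = 0
      · exact ⟨0, by rw [hS0]; simp, fun t' ht' => absurd rfl ht'⟩
      · obtain ⟨qq, h1, h2⟩ := hred i j
        exact ⟨qq, h1, fun t' ht' => ⟨hS0, h2 t' ht'⟩⟩
    choose q hq1 hq2 using hq
    set Qt : Fin M → MvPolynomial (Fin n) R := fun t' => ∑ pr ∈ P,
      C (lam pr.1 pr.2) * (monomial (e - (mDeg m (f pr.1) ⊔ mDeg m (f pr.2))) 1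
        * q pr.1 pr.2 t') with hQt
    -- degree bound on Qt
    have hQ3 : ∀ t', Qt t' ≠ 0 →
        m.toSyn (mDeg m (Qt t') + mDeg m (f t')) < m.toSyn e := by
      intro t' hQne
      have hdmem := mDeg_mem m hQne
      rw [hQt] at hdmem
      obtain ⟨pr, hprP, hdpr⟩ := mem_support_sum hdmem
      have hqne : q pr.1 pr.2 t' ≠ 0 := by
        intro h0
        rw [h0, mul_zero, mul_zero] at hdpr
        simp at hdpr
      obtain ⟨hSne, hqdeg⟩ := hq2 pr.1 pr.2 t' hqne
      have h1 : m.toSyn (mDeg m (Qt t'))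
          ≤ m.toSyn (mDeg m (C (lam pr.1 pr.2)
            * (monomial (e - (mDeg m (f pr.1) ⊔ mDeg m (f pr.2))) 1 * q pr.1 pr.2 t'))) :=
        le_mDeg m hdpr
      have h2 : m.toSyn (mDeg m (C (lam pr.1 pr.2)
            * (monomial (e - (mDeg m (f pr.1) ⊔ mDeg m (f pr.2))) 1 * q pr.1 pr.2 t')))
          ≤ m.toSyn (e - (mDeg m (f pr.1) ⊔ mDeg m (f pr.2)))
            + m.toSyn (mDeg m (q pr.1 pr.2 t')) := by
        calc m.toSyn (mDeg m (C (lam pr.1 pr.2)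
              * (monomial (e - (mDeg m (f pr.1) ⊔ mDeg m (f pr.2))) 1 * q pr.1 pr.2 t')))
            ≤ m.toSyn (mDeg m (C (lam pr.1 pr.2) : MvPolynomial (Fin n) R))
              + m.toSyn (mDeg m (monomial (e - (mDeg m (f pr.1) ⊔ mDeg m (f pr.2))) 1
                * q pr.1 pr.2 t')) := mDeg_mul_le m _ _
          _ ≤ 0 + (m.toSyn (mDeg m ((monomial (e - (mDeg m (f pr.1) ⊔ mDeg m (f pr.2))))
                (1:R))) + m.toSyn (mDeg m (q pr.1 pr.2 t'))) :=
              add_le_add (mDeg_C_le m _) (mDeg_mul_le m _ _)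
          _ ≤ 0 + (m.toSyn (e - (mDeg m (f pr.1) ⊔ mDeg m (f pr.2)))
                + m.toSyn (mDeg m (q pr.1 pr.2 t'))) := by
              apply add_le_add_right
              exact add_le_add_left (mDeg_monomial_le m _ _) _
          _ = m.toSyn (e - (mDeg m (f pr.1) ⊔ mDeg m (f pr.2)))
                + m.toSyn (mDeg m (q pr.1 pr.2 t')) := by rw [zero_add]
      have h4 : m.toSyn (mDeg m (sMonSPoly m s f c α pr.1 pr.2))
          < m.toSyn (mDeg m (f pr.1) ⊔ mDeg m (f pr.2)) :=
        sspoly_deg_lt m s f c α hlc hSne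
      have h5 : m.toSyn (mDeg m (Qt t')) + m.toSyn (mDeg m (f t'))
          < m.toSyn (e - (mDeg m (f pr.1) ⊔ mDeg m (f pr.2)))
            + m.toSyn (mDeg m (f pr.1) ⊔ mDeg m (f pr.2)) := by
        calc m.toSyn (mDeg m (Qt t')) + m.toSyn (mDeg m (f t'))
            ≤ (m.toSyn (e - (mDeg m (f pr.1) ⊔ mDeg m (f pr.2)))
              + m.toSyn (mDeg m (q pr.1 pr.2 t'))) + m.toSyn (mDeg m (f t')) :=
              add_le_add_left (le_trans h1 h2) _
          _ = m.toSyn (e - (mDeg m (f pr.1) ⊔ mDeg m (f pr.2)))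
              + (m.toSyn (mDeg m (q pr.1 pr.2 t')) + m.toSyn (mDeg m (f t'))) := by
              rw [add_assoc]
          _ ≤ m.toSyn (e - (mDeg m (f pr.1) ⊔ mDeg m (f pr.2)))
              + m.toSyn (mDeg m (sMonSPoly m s f c α pr.1 pr.2)) := by
              apply add_le_add_right
              rw [← map_add]
              exact hqdeg
          _ < _ := add_lt_add_right h4 _
      rw [map_add]
      calc m.toSyn (mDeg m (Qt t')) + m.toSyn (mDeg m (f t'))
          < m.toSyn (e - (mDeg m (f pr.1) ⊔ mDeg m (f pr.2)))
            + m.toSyn (mDeg m (f pr.1) ⊔ mDeg m (f pr.2)) := h5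
        _ = m.toSyn e := by
            rw [← map_add, tsub_add_cancel_of_le (hδle pr hprP)]
    -- the pairing identity
    have hA : ∀ i ∈ T, mLT m (p i) * f i
        = ∑ j ∈ T, C (lam i j) * (monomial (mDeg m (p i))
            (↑(c i)⁻¹ * ∏ v, s v ^ (max (α i v) (α j v) - α i v)) * f i) := by
      intro i hi
      have hlcp : mLC m (p i) = ↑(c i)⁻¹ * (mLC m (p i) * ↑(c i)) := by
        rw [mul_comm (mLC m (p i)) (↑(c i) : R), ← mul_assoc, Units.inv_mul, one_mul]
      rw [mLT, hlcp, hlam' i hi, Finset.mul_sum, map_sum, Finset.sum_mul]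
      apply Finset.sum_congr rfl
      intro j hj
      rw [mul_left_comm (↑(c i)⁻¹ : R) (lam i j) _, ← MvPolynomial.C_mul_monomial,
        mul_assoc]
    have hbracket : ∀ pr : Fin M × Fin M, pr ∈ P →
        C (lam pr.1 pr.2) * (monomial (mDeg m (p pr.1))
            (↑(c pr.1)⁻¹ * ∏ v, s v ^ (max (α pr.1 v) (α pr.2 v) - α pr.1 v)) * f pr.1)
          + C (lam pr.2 pr.1) * (monomial (mDeg m (p pr.2))
            (↑(c pr.2)⁻¹ * ∏ v, s v ^ (max (α pr.2 v) (α pr.1 v) - α pr.2 v)) * f pr.2)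
        = C (lam pr.1 pr.2) * (monomial (e - (mDeg m (f pr.1) ⊔ mDeg m (f pr.2))) 1
            * sMonSPoly m s f c α pr.1 pr.2) := by
      intro pr hpr
      obtain ⟨h1T, h2T⟩ := hPT pr hpr
      have hm1 : (monomial (e - (mDeg m (f pr.1) ⊔ mDeg m (f pr.2)))) (1:R)
          * (monomial ((mDeg m (f pr.1) ⊔ mDeg m (f pr.2)) - mDeg m (f pr.1)))
            (↑(c pr.1)⁻¹ * ∏ v, s v ^ (max (α pr.1 v) (α pr.2 v) - α pr.1 v))
          = (monomial (mDeg m (p pr.1)))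
            (↑(c pr.1)⁻¹ * ∏ v, s v ^ (max (α pr.1 v) (α pr.2 v) - α pr.1 v)) := by
        rw [MvPolynomial.monomial_mul, one_mul]
        congr 1
        rw [tsub_add_tsub_cancel (hδle pr hpr) le_sup_left]
        rw [← (hTmem pr.1 h1T).2, add_tsub_cancel_right]
      have hm2 : (monomial (e - (mDeg m (f pr.1) ⊔ mDeg m (f pr.2)))) (1:R)
          * (monomial ((mDeg m (f pr.1) ⊔ mDeg m (f pr.2)) - mDeg m (f pr.2)))
            (↑(c pr.2)⁻¹ * ∏ v, s v ^ (max (α pr.1 v) (α pr.2 v) - α pr.2 v))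
          = (monomial (mDeg m (p pr.2)))
            (↑(c pr.2)⁻¹ * ∏ v, s v ^ (max (α pr.1 v) (α pr.2 v) - α pr.2 v)) := by
        rw [MvPolynomial.monomial_mul, one_mul]
        congr 1
        rw [tsub_add_tsub_cancel (hδle pr hpr) le_sup_right]
        rw [← (hTmem pr.2 h2T).2, add_tsub_cancel_right]
      have hprodswap : (∏ v, s v ^ (max (α pr.2 v) (α pr.1 v) - α pr.2 v))
          = ∏ v, s v ^ (max (α pr.1 v) (α pr.2 v) - α pr.2 v) :=
        Finset.prod_congr rfl (fun v _ => by rw [Nat.max_comm])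
      have hS : (monomial (e - (mDeg m (f pr.1) ⊔ mDeg m (f pr.2)))) (1:R)
          * sMonSPoly m s f c α pr.1 pr.2
          = (monomial (mDeg m (p pr.1)))
              (↑(c pr.1)⁻¹ * ∏ v, s v ^ (max (α pr.1 v) (α pr.2 v) - α pr.1 v)) * f pr.1
            - (monomial (mDeg m (p pr.2)))
              (↑(c pr.2)⁻¹ * ∏ v, s v ^ (max (α pr.1 v) (α pr.2 v) - α pr.2 v)) * f pr.2 := by
        unfold sMonSPoly
        rw [mul_sub, ← mul_assoc, ← mul_assoc, hm1, hm2]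
      rw [hprodswap, hanti pr.2 pr.1, map_neg, neg_mul, hS]
      ring
    have hpair : ∑ i ∈ T, mLT m (p i) * f i
        = ∑ pr ∈ P, C (lam pr.1 pr.2)
            * (monomial (e - (mDeg m (f pr.1) ⊔ mDeg m (f pr.2))) 1
              * sMonSPoly m s f c α pr.1 pr.2) := by
      rw [Finset.sum_congr rfl hA]
      rw [sum_sq_split T (fun i j => C (lam i j) * (monomial (mDeg m (p i))
          (↑(c i)⁻¹ * ∏ v, s v ^ (max (α i v) (α j v) - α i v)) * f i))
        (fun i _ => by rw [hdiag i, map_zero, zero_mul])]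
      rw [← hP]
      apply Finset.sum_congr rfl
      intro pr hpr
      exact hbracket pr hpr
    -- sum of the Q-terms
    have hQsum : ∑ t', Qt t' * f t' = ∑ i ∈ T, mLT m (p i) * f i := by
      rw [hpair]
      have h1 : ∑ t', Qt t' * f t' = ∑ pr ∈ P, ∑ t' : Fin M,
          (C (lam pr.1 pr.2) * (monomial (e - (mDeg m (f pr.1) ⊔ mDeg m (f pr.2))) 1
            * q pr.1 pr.2 t')) * f t' := by
        rw [Finset.sum_comm]
        apply Finset.sum_congr rfl
        intro t' _
        rw [hQt, Finset.sum_mul]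
      rw [h1]
      apply Finset.sum_congr rfl
      intro pr _
      rw [hq1 pr.1 pr.2, Finset.mul_sum, Finset.mul_sum]
      apply Finset.sum_congr rfl
      intro t' _
      ring
    -- the new representation
    set p' : Fin M → MvPolynomial (Fin n) R := fun t' =>
      (if t' ∈ T then p t' - mLT m (p t') else p t') + Qt t' with hp'
    have hp'def : ∀ t', p' t' = (if t' ∈ T then p t' - mLT m (p t') else p t') + Qt t' :=
      fun t' => rfl
    have hrep' : ∑ t', p' t' * f t' = g := by
      have h1 : ∀ t' : Fin M, p' t' * f t'
          = (p t' * f t' - (if t' ∈ T then mLT m (p t') * f t' else 0)) + Qt t' * f t' := by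
        intro t'
        rw [hp'def t']
        by_cases ht' : t' ∈ T
        · rw [if_pos ht', if_pos ht']
          ring
        · rw [if_neg ht', if_neg ht']
          ring
      rw [Finset.sum_congr rfl (fun t' _ => h1 t'), Finset.sum_add_distrib,
        Finset.sum_sub_distrib, hpg, Finset.sum_ite_mem, Finset.univ_inter, hQsum]
      ring
    have hbound : ∀ t', p' t' ≠ 0 →
        m.toSyn (mDeg m (p' t') + mDeg m (f t')) < m.toSyn e := by
      intro t' hne
      rw [hp'def t'] at hne ⊢
      apply guard_add_lt m _ (hQ3 t') hne
      intro hne1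
      by_cases ht'T : t' ∈ T
      · rw [if_pos ht'T] at hne1 ⊢
        have h1 : m.toSyn (mDeg m (p t' - mLT m (p t'))) < m.toSyn (mDeg m (p t')) :=
          mDeg_tail_lt m hne1
        have h2 : m.toSyn (mDeg m (p t')) + m.toSyn (mDeg m (f t')) = m.toSyn e := by
          rw [← map_add, (hTmem t' ht'T).2]
        rw [map_add, ← h2]
        exact add_lt_add_left h1 _
      · rw [if_neg ht'T] at hne1 ⊢
        exact hnotT t' ht'T hne1
    have hBlt : B p' < δ := by
      rw [hBdef p']
      rw [Finset.sup_lt_iff (lt_of_le_of_lt bot_le hcase)]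
      intro i _
      by_cases h0 : p' i = 0
      · rw [if_pos h0]
        exact lt_of_le_of_lt bot_le hcase
      · rw [if_neg h0, hδe]
        exact hbound i h0
    exact hmin (B p') ⟨p', hrep', rfl⟩ hBlt

end Main


end PGBAux



/-- Buchberger's criterion for `s`-monomial type polynomials. -/
theorem buchberger_criterion_sMonomialType
    {n : ℕ} {R : Type*} [CommRing R] (m : MonomialOrder (Fin n))
    {k : ℕ} (s : Fin k → R) (hs : IsPermutableWeakRegularSeq s)
    {M : ℕ} (f : Fin M → MvPolynomial (Fin n) R) (hf : ∀ i, f i ≠ 0)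
    (c : Fin M → Rˣ) (α : Fin M → Fin k → ℕ)
    (hlc : ∀ i, mLC m (f i) = ↑(c i) * ∏ t, s t ^ α i t) :
    IsGroebnerBasis m (Ideal.span (Set.range f)) f ↔
      ∀ i j : Fin M, i < j → ReducesToZero m f (sMonSPoly m s f c α i j) := by
  classical
  constructor
  · rintro ⟨hne, hmemI, hspan⟩ i j hij
    have hSmem : sMonSPoly m s f c α i j ∈ Ideal.span (Set.range f) := by
      unfold sMonSPoly
      apply Submodule.sub_mem
      · exact Ideal.mul_mem_left _ _ (Ideal.subset_span ⟨i, rfl⟩)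
      · exact Ideal.mul_mem_left _ _ (Ideal.subset_span ⟨j, rfl⟩)
    exact (PGBAux.redZ_iff m f _).1
      (PGBAux.redZ_of_mem m (I := Ideal.span (Set.range f))
        (fun l => Ideal.subset_span ⟨l, rfl⟩) hspan hSmem)
  · intro hred
    have hred' := PGBAux.redZ_sspoly_all m s f c α hred
    refine ⟨hf, fun i => Ideal.subset_span ⟨i, rfl⟩, ?_⟩
    apply le_antisymm
    · rw [Ideal.span_le]
      rintro x ⟨i, rfl⟩
      exact Ideal.subset_span ⟨f i, ⟨Ideal.subset_span ⟨i, rfl⟩, hf i⟩, rfl⟩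
    · rw [mLTIdeal, Ideal.span_le]
      rintro x ⟨g, ⟨hgI, hg0⟩, rfl⟩
      exact PGBAux.mLT_mem_span_of_sspoly m hs hlc hred' hgI hg0
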